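/- For the renewal process on Z^+ started at 0 with interarrival law η{j} = (α/Γ(2-α))·Γ(j-α+1)/Γ(j+2) (j ≥ 1) in the case α = 1/2, the renewal measure satisfies P(j ∈ S) = (1/2)·(Γ(j+1/2)/(Γ(1/2)Γ(j+1)) + 1_{j=0}) for all j ≥ 0; equivalently, Σ_{j≥0} P(j ∈ S) s^j = (1/2)(1/√(1-s) + 1) for s ∈ (0,1). -/

import Mathlib

open Real

set_option maxHeartbeats 1000000

open Finset Nat in
/-- Reflection helper. -/
private lemma auxReflect (n : ℕ) (f g : ℕ → ℕ) :
    ∑ k ∈ range (n + 1), f k * g (n - k) = ∑ k ∈ range (n + 1), f (n - k) * g k := by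
  rw [← Finset.sum_range_reflect (fun k => f (n - k) * g k) (n + 1)]
  apply Finset.sum_congr rfl
  intro k hk
  rw [Finset.mem_range] at hk
  congr 1 <;> congr 1 <;> omega

open Finset Nat in
private lemma two_convCB (n : ℕ) :
    2 * ∑ k ∈ range (n + 1), catalan k * centralBinom (n - k) = centralBinom (n + 1) := by
  have hrefl := auxReflect n catalan centralBinom
  have key : 2 * ∑ k ∈ range (n + 1), catalan k * centralBinom (n - k)
      = (n + 2) * ∑ k ∈ range (n + 1), catalan k * catalan (n - k) := by
    rw [two_mul]
    nth_rewrite 2 [hrefl]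
    rw [← Finset.sum_add_distrib, Finset.mul_sum]
    apply Finset.sum_congr rfl
    intro k hk
    rw [Finset.mem_range] at hk
    obtain ⟨m, rfl⟩ := Nat.exists_eq_add_of_le (by omega : k ≤ n)
    rw [Nat.add_sub_cancel_left, ← succ_mul_catalan_eq_centralBinom,
      ← succ_mul_catalan_eq_centralBinom]
    ring
  rw [key]
  have h : catalan (n + 1) = ∑ k ∈ range (n + 1), catalan k * catalan (n - k) := by
    rw [catalan_succ]
    exact (Finset.sum_range (fun i => catalan i * catalan (n - i))).symm
  rw [← h, succ_mul_catalan_eq_centralBinom]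

open Finset Nat in
private lemma cB_succ_add (j : ℕ) :
    centralBinom (j + 1) + 2 * catalan j = 4 * centralBinom j := by
  apply Nat.eq_of_mul_eq_mul_left (show 0 < j + 1 by omega)
  have h1 := succ_mul_centralBinom_succ j
  have h2 := succ_mul_catalan_eq_centralBinom j
  ring_nf
  ring_nf at h1 h2
  nlinarith [h1, h2]

open Finset Nat in
private lemma natA (j : ℕ) :
    (∑ i ∈ range j, catalan (j - i) * centralBinom i) + catalan j = centralBinom j := by
  have peel : ∑ k ∈ range (j + 1), catalan k * centralBinom (j - k)
      = (∑ i ∈ range j, catalan (i + 1) * centralBinom (j - (i + 1))) + centralBinom j := by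
    rw [Finset.sum_range_succ' (fun k => catalan k * centralBinom (j - k)) j]
    simp
  have hrefl : ∑ i ∈ range j, catalan (j - i) * centralBinom i
      = ∑ i ∈ range j, catalan (i + 1) * centralBinom (j - (i + 1)) := by
    rw [← Finset.sum_range_reflect (fun i => catalan (i + 1) * centralBinom (j - (i + 1))) j]
    apply Finset.sum_congr rfl
    intro k hk
    rw [Finset.mem_range] at hk
    congr 1 <;> congr 1 <;> omega
  have h2S := two_convCB j
  rw [peel] at h2S
  have h4 := cB_succ_add j
  omega

open Finset Nat in
private lemma conv4 (n : ℕ) :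
    ∑ k ∈ range (n + 1), centralBinom k * centralBinom (n - k) = 4 ^ n := by
  induction n with
  | zero => simp [Nat.centralBinom_zero]
  | succ n ih =>
    set b := centralBinom with hb
    have step : (n + 1) * ∑ k ∈ range (n + 2), b k * b (n + 1 - k)
        = (n + 1) * (4 * ∑ k ∈ range (n + 1), b k * b (n - k)) := by
      have symm1 : ∑ j ∈ range (n + 2), (n + 1 - j) * (b j * b (n + 1 - j))
          = ∑ j ∈ range (n + 2), j * (b j * b (n + 1 - j)) := by
        rw [← Finset.sum_range_reflect (fun j => j * (b j * b (n + 1 - j))) (n + 2)]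
        apply Finset.sum_congr rfl
        intro k hk
        rw [Finset.mem_range] at hk
        have h1 : n + 2 - 1 - k = n + 1 - k := by omega
        have h2 : n + 1 - (n + 1 - k) = k := by omega
        rw [h1, h2]
        ring
      have split : (n + 1) * ∑ k ∈ range (n + 2), b k * b (n + 1 - k)
          = 2 * ∑ j ∈ range (n + 2), j * (b j * b (n + 1 - j)) := by
        rw [Finset.mul_sum, two_mul]
        nth_rewrite 2 [← symm1]
        rw [← Finset.sum_add_distrib]
        apply Finset.sum_congr rfl
        intro k hk
        rw [Finset.mem_range] at hk
        set m := n + 1 - k with hm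
        have hkm : k + m = n + 1 := by omega
        rw [← hkm]
        ring
      have peel : ∑ j ∈ range (n + 2), j * (b j * b (n + 1 - j))
          = ∑ k ∈ range (n + 1), (k + 1) * (b (k + 1) * b (n - k)) := by
        rw [Finset.sum_range_succ' (fun j => j * (b j * b (n + 1 - j))) (n + 1)]
        simp only [Nat.zero_mul, Nat.add_zero, zero_mul, add_zero]
        apply Finset.sum_congr rfl
        intro k hk
        have h : n + 1 - (k + 1) = n - k := by omega
        rw [h]
      have recb : ∀ k, (k + 1) * (b (k + 1) * b (n - k))
          = 2 * (2 * k + 1) * (b k * b (n - k)) := by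
        intro k
        have h := succ_mul_centralBinom_succ k
        calc (k + 1) * (b (k + 1) * b (n - k)) = ((k + 1) * b (k + 1)) * b (n - k) := by ring
        _ = (2 * (2 * k + 1) * b k) * b (n - k) := by rw [hb]; rw [h]
        _ = 2 * (2 * k + 1) * (b k * b (n - k)) := by ring
      have symm2 : ∑ k ∈ range (n + 1), (2 * (n - k) + 1) * (b k * b (n - k))
          = ∑ k ∈ range (n + 1), (2 * k + 1) * (b k * b (n - k)) := by
        rw [← Finset.sum_range_reflect (fun k => (2 * k + 1) * (b k * b (n - k))) (n + 1)]
        apply Finset.sum_congr rfl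
        intro k hk
        rw [Finset.mem_range] at hk
        have h1 : n + 1 - 1 - k = n - k := by omega
        have h2 : n - (n - k) = k := by omega
        rw [h1, h2]
        ring
      have doub : 2 * ∑ k ∈ range (n + 1), (2 * k + 1) * (b k * b (n - k))
          = (2 * n + 2) * ∑ k ∈ range (n + 1), b k * b (n - k) := by
        rw [two_mul]
        nth_rewrite 1 [← symm2]
        rw [← Finset.sum_add_distrib, Finset.mul_sum]
        apply Finset.sum_congr rfl
        intro k hk
        rw [Finset.mem_range] at hk
        set m := n - k with hm
        have hkm : k + m = n := by omega
        have h2n : 2 * n + 2 = 2 * (k + m) + 2 := by rw [hkm]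
        rw [h2n]
        ring
      calc (n + 1) * ∑ k ∈ range (n + 2), b k * b (n + 1 - k)
          = 2 * ∑ j ∈ range (n + 2), j * (b j * b (n + 1 - j)) := split
        _ = 2 * ∑ k ∈ range (n + 1), (k + 1) * (b (k + 1) * b (n - k)) := by rw [peel]
        _ = 2 * (2 * ∑ k ∈ range (n + 1), (2 * k + 1) * (b k * b (n - k))) := by
            congr 1
            rw [Finset.mul_sum]
            apply Finset.sum_congr rfl
            intro k _
            rw [recb k]
            ring
        _ = 2 * ((2 * n + 2) * ∑ k ∈ range (n + 1), b k * b (n - k)) := by rw [doub]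
        _ = (n + 1) * (4 * ∑ k ∈ range (n + 1), b k * b (n - k)) := by ring
    have h := Nat.eq_of_mul_eq_mul_left (show 0 < n + 1 by omega) step
    rw [h, ih]
    ring

open Nat in
private lemma gammaHalf (n : ℕ) :
    Real.Gamma ((n : ℝ) + 1/2) = Real.sqrt Real.pi * (Nat.centralBinom n) * (n)! / 4 ^ n := by
  induction n with
  | zero =>
    rw [show ((0:ℕ):ℝ) + 1/2 = 1/2 by norm_num, Real.Gamma_one_half_eq]
    simp
  | succ n ih =>
    have hne : ((n : ℝ) + 1/2) ≠ 0 := by positivity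
    have h1 : ((n + 1 : ℕ) : ℝ) + 1/2 = ((n : ℝ) + 1/2) + 1 := by push_cast; ring
    rw [h1, Real.Gamma_add_one hne, ih]
    have key : ((n : ℝ) + 1) * (Nat.centralBinom (n+1))
        = 2 * (2 * (n:ℝ) + 1) * Nat.centralBinom n := by
      exact_mod_cast Nat.succ_mul_centralBinom_succ n
    have hfac : (((n+1) : ℕ)! : ℝ) = ((n : ℝ) + 1) * (n)! := by
      rw [Nat.factorial_succ]; push_cast; ring
    rw [hfac, pow_succ]
    have h4 : (4:ℝ)^n ≠ 0 := by positivity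
    field_simp
    linear_combination (-2) * key

private lemma cB_le (n : ℕ) : Nat.centralBinom n ≤ 4 ^ n := by
  have h1 : Nat.centralBinom n ≤ ∑ m ∈ Finset.range (2*n + 1), (2*n).choose m := by
    rw [Nat.centralBinom_eq_two_mul_choose]
    exact Finset.single_le_sum (fun i _ => Nat.zero_le _) (Finset.mem_range.mpr (by omega))
  rw [Nat.sum_range_choose] at h1
  calc Nat.centralBinom n ≤ 2 ^ (2 * n) := h1
    _ = 4 ^ n := by rw [pow_mul]; norm_num

/-- Renewal measure of the range of the fixation line of the Beta(3/2,1/2)-coalescent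
(case α = 1/2): interarrival law `η j = (α/Γ(2-α)) Γ(j-α+1)/Γ(j+2)` with `α = 1/2`. -/
theorem stmt_8 (η u : ℕ → ℝ)
    (hη : ∀ j : ℕ, 1 ≤ j →
      η j = (1/2) / Real.Gamma (2 - 1/2) *
        (Real.Gamma ((j : ℝ) - 1/2 + 1) / Real.Gamma ((j : ℝ) + 2)))
    (hu0 : u 0 = 1)
    (hu : ∀ i : ℕ, 1 ≤ i → u i = ∑ j ∈ Finset.range i, η (i - j) * u j) :
    (∀ j : ℕ, u j = 1/2 *
        (Real.Gamma ((j : ℝ) + 1/2) / (Real.Gamma (1/2) * Real.Gamma ((j : ℝ) + 1)) +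
          if j = 0 then 1 else 0)) ∧
    ∀ s ∈ Set.Ioo (0:ℝ) 1,
      (∑' j : ℕ, u j * s ^ j) = 1/2 * (1 / Real.sqrt (1 - s) + 1) := by
  have sqrtpi_pos : 0 < Real.sqrt Real.pi := Real.sqrt_pos.mpr Real.pi_pos
  -- the Gamma ratio equals centralBinom j / 4^j
  have hγ : ∀ j : ℕ, Real.Gamma ((j:ℝ) + 1/2) / (Real.Gamma (1/2) * Real.Gamma ((j:ℝ) + 1))
      = (Nat.centralBinom j : ℝ) / 4 ^ j := by
    intro j
    rw [gammaHalf j, Real.Gamma_one_half_eq, Real.Gamma_nat_eq_factorial]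
    have h1 : (j.factorial : ℝ) ≠ 0 := Nat.cast_ne_zero.mpr (Nat.factorial_ne_zero j)
    have h4 : (4:ℝ)^j ≠ 0 := by positivity
    field_simp
  -- the interarrival law equals catalan j / 4^j
  have hηd : ∀ j : ℕ, 1 ≤ j → η j = (catalan j : ℝ) / 4 ^ j := by
    intro j hj
    rw [hη j hj]
    have e2 : (2 - 1/2 : ℝ) = ((1:ℕ):ℝ) + 1/2 := by norm_num
    have e3 : ((j:ℝ) - 1/2 + 1) = (j:ℝ) + 1/2 := by ring
    have e4 : ((j:ℝ) + 2) = ((j+1 : ℕ):ℝ) + 1 := by push_cast; ring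
    rw [e2, gammaHalf 1, e3, gammaHalf j, e4, Real.Gamma_nat_eq_factorial]
    have hcat : ((j:ℝ) + 1) * (catalan j : ℝ) = (Nat.centralBinom j : ℝ) := by
      exact_mod_cast succ_mul_catalan_eq_centralBinom j
    have hfac : ((j+1).factorial : ℝ) = ((j:ℝ)+1) * j.factorial := by
      rw [Nat.factorial_succ]; push_cast; ring
    have hcB1 : (Nat.centralBinom 1 : ℝ) = 2 := by norm_num [Nat.centralBinom]
    rw [hfac, hcB1]
    have hj1 : ((j:ℝ) + 1) ≠ 0 := by positivity
    have hfj : (j.factorial : ℝ) ≠ 0 := Nat.cast_ne_zero.mpr (Nat.factorial_ne_zero j)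
    have h4 : (4:ℝ)^j ≠ 0 := by positivity
    simp only [Nat.factorial_one, Nat.cast_one, pow_one]
    field_simp
    linear_combination (-4) * hcat
  -- solution of the renewal recursion
  have hu' : ∀ j : ℕ, u j = 1/2 * ((Nat.centralBinom j : ℝ) / 4 ^ j + if j = 0 then 1 else 0) := by
    intro j
    induction j using Nat.strong_induction_on with
    | _ j ih =>
      rcases Nat.eq_zero_or_pos j with rfl | hj
      · simp [hu0, Nat.centralBinom_zero]
        norm_num
      · rw [hu j hj]
        have hterm : ∀ i ∈ Finset.range j, η (j - i) * u i
            = 1/2 * (((catalan (j-i) * Nat.centralBinom i : ℕ) : ℝ) / 4 ^ j)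
              + (if i = 0 then 1/2 * ((catalan j : ℝ) / 4 ^ j) else 0) := by
          intro i hi
          rw [Finset.mem_range] at hi
          rw [hηd (j - i) (by omega), ih i hi]
          have h4 : (4:ℝ)^(j-i) * 4^i = 4^j := by rw [← pow_add]; congr 1; omega
          rcases eq_or_ne i 0 with rfl | hi0
          · simp only [if_pos rfl, Nat.sub_zero, Nat.centralBinom_zero]
            push_cast
            simp only [pow_zero]
            ring
          · rw [if_neg hi0, if_neg hi0, add_zero, add_zero]
            push_cast
            rw [← h4]
            ring
        rw [Finset.sum_congr rfl hterm, Finset.sum_add_distrib,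
          Finset.sum_ite_eq' (Finset.range j) 0 (fun _ => 1/2 * ((catalan j : ℝ) / 4 ^ j))]
        rw [if_pos (Finset.mem_range.mpr hj)]
        have hSS : ∑ i ∈ Finset.range j, 1/2 * (((catalan (j-i) * Nat.centralBinom i : ℕ) : ℝ) / 4 ^ j)
            = 1/2 * (((∑ i ∈ Finset.range j, catalan (j-i) * Nat.centralBinom i : ℕ) : ℝ) / 4 ^ j) := by
          rw [← Finset.mul_sum, ← Finset.sum_div, Nat.cast_sum]
        rw [hSS]
        have hA : ((∑ i ∈ Finset.range j, catalan (j-i) * Nat.centralBinom i : ℕ) : ℝ)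
            + (catalan j : ℝ) = (Nat.centralBinom j : ℝ) := by
          exact_mod_cast natA j
        rw [if_neg (by omega : j ≠ 0), ← hA]
        ring
  constructor
  · intro j
    rw [hγ j]
    exact hu' j
  · intro s hs
    obtain ⟨hs0, hs1⟩ := hs
    have h1s : 0 < 1 - s := by linarith
    set c : ℕ → ℝ := fun j => (Nat.centralBinom j : ℝ) / 4 ^ j with hc
    have hc_le_one : ∀ j, c j ≤ 1 := by
      intro j
      rw [hc]
      simp only
      rw [div_le_one (by positivity)]
      have := cB_le j
      calc (Nat.centralBinom j : ℝ) ≤ ((4 ^ j : ℕ) : ℝ) := by exact_mod_cast this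
        _ = 4 ^ j := by push_cast; ring
    have hgeo : Summable (fun j : ℕ => s ^ j) :=
      summable_geometric_of_lt_one hs0.le hs1
    have hsum : Summable (fun j => c j * s ^ j) := by
      apply hgeo.of_nonneg_of_le (fun j => by positivity)
      intro j
      calc c j * s ^ j ≤ 1 * s ^ j :=
        mul_le_mul_of_nonneg_right (hc_le_one j) (by positivity)
      _ = s ^ j := one_mul _
    set F := ∑' j, c j * s ^ j with hF
    have hF1 : 1 ≤ F := by
      have h := Summable.le_tsum hsum 0 (fun i _ => by positivity)
      simpa [hc] using h
    have hcnn : ∀ j, 0 ≤ c j * s ^ j := by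
      intro j
      have : 0 ≤ c j := by rw [hc]; positivity
      exact mul_nonneg this (by positivity)
    have hprod : Summable (fun x : ℕ × ℕ => (c x.1 * s ^ x.1) * (c x.2 * s ^ x.2)) :=
      hsum.mul_of_nonneg hsum hcnn hcnn
    have hF2 : F * F = (1 - s)⁻¹ := by
      rw [hF, Summable.tsum_mul_tsum_eq_tsum_sum_range hsum hsum hprod]
      have hinner : ∀ n : ℕ,
          ∑ k ∈ Finset.range (n+1), (c k * s ^ k) * (c (n-k) * s ^ (n-k)) = s ^ n := by
        intro n
        have hterm2 : ∀ k ∈ Finset.range (n+1), (c k * s ^ k) * (c (n-k) * s ^ (n-k))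
            = ((Nat.centralBinom k * Nat.centralBinom (n-k) : ℕ) : ℝ) * s ^ n / 4 ^ n := by
          intro k hk
          rw [Finset.mem_range] at hk
          have h4 : (4:ℝ)^k * 4^(n-k) = 4^n := by rw [← pow_add]; congr 1; omega
          have hspow : s^k * s^(n-k) = s^n := by rw [← pow_add]; congr 1; omega
          rw [hc]
          simp only
          push_cast
          rw [← h4, ← hspow]
          ring
        rw [Finset.sum_congr rfl hterm2, ← Finset.sum_div, ← Finset.sum_mul, ← Nat.cast_sum,
          conv4]
        push_cast
        rw [mul_comm ((4:ℝ)^n) (s^n), mul_div_assoc, div_self (by positivity : (4:ℝ)^n ≠ 0),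
          mul_one]
      rw [tsum_congr hinner, tsum_geometric_of_lt_one hs0.le hs1]
    have hFpos : 0 < F := by linarith
    have hFval : F = 1 / Real.sqrt (1 - s) := by
      have h := Real.sqrt_mul_self hFpos.le
      rw [← h, hF2, Real.sqrt_inv, one_div]
    have hterm : ∀ j : ℕ, u j * s ^ j = 1/2 * (c j * s ^ j) + (if j = 0 then (1/2 : ℝ) else 0) := by
      intro j
      rw [hu' j]
      rcases eq_or_ne j 0 with rfl | hj
      · simp [hc, Nat.centralBinom_zero]
        norm_num
      · rw [if_neg hj, if_neg hj, hc]
        simp only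
        ring
    rw [tsum_congr hterm, Summable.tsum_add (hsum.mul_left _) ((hasSum_ite_eq 0 (1/2:ℝ)).summable),
      tsum_mul_left, tsum_ite_eq, ← hF, hFval]
    ring
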